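/- arXiv:1607.00315 — 2 statements merged into one kernel-verified Lean document; each statement's English description precedes it below -/
import Mathlib

section
/- Let f: ℝⁿ → ℝ be C² convex with ‖∇²f(x)‖ ≤ M for all x, let λ > 0, and let F(x) = f(x) + λ‖x‖₁. Fix x ∈ ℝⁿ and let H be symmetric with H ⪰ γI for some γ > 0. Suppose z minimizes z ↦ ⟨∇f(x), z⟩ + (1/2)⟨z, Hz⟩ + λ‖x+z‖₁. Then for any α with 0 < α < 1, F(x) − F(x + αz) ≥ (1/2)α γ ‖z‖² − (1/2)α² M ‖z‖². -/
open InnerProductSpace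

lemma taylor_ub {n : ℕ} (f : EuclideanSpace ℝ (Fin n) → ℝ) (M : ℝ)
    (hf : ContDiff ℝ 2 f) (hM : ∀ y, ‖iteratedFDeriv ℝ 2 f y‖ ≤ M)
    (x v : EuclideanSpace ℝ (Fin n)) :
    f (x + v) ≤ f x + (inner ℝ (gradient f x) v : ℝ) + M / 2 * ‖v‖ ^ 2 := by
  have hd : Differentiable ℝ f := hf.differentiable (by norm_num)
  have hd' : Differentiable ℝ (fderiv ℝ f) :=
    (hf.fderiv_right (m := 1) (by norm_num)).differentiable one_ne_zero
  -- Lipschitz bound on fderiv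
  have hlip : ∀ y y' : EuclideanSpace ℝ (Fin n),
      ‖fderiv ℝ f y - fderiv ℝ f y'‖ ≤ M * ‖y - y'‖ := by
    intro y y'
    refine Convex.norm_image_sub_le_of_norm_fderiv_le (fun a _ => hd' a)
      (fun a _ => ?_) convex_univ (Set.mem_univ _) (Set.mem_univ _)
    calc ‖fderiv ℝ (fderiv ℝ f) a‖
        = ‖iteratedFDeriv ℝ 0 (fderiv ℝ (fderiv ℝ f)) a‖ := by rw [norm_iteratedFDeriv_zero]
      _ = ‖iteratedFDeriv ℝ 1 (fderiv ℝ f) a‖ := norm_iteratedFDeriv_fderiv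
      _ = ‖iteratedFDeriv ℝ 2 f a‖ := norm_iteratedFDeriv_fderiv
      _ ≤ M := hM a
  -- inner ℝ gradient = fderiv
  have hgrad : ∀ (y w : EuclideanSpace ℝ (Fin n)),
      (inner ℝ (gradient f y) w : ℝ) = fderiv ℝ f y w := by
    intro y w
    rw [gradient]
    exact toDual_symm_apply
  set φ : ℝ → ℝ := fun t =>
    f (x + t • v) - t * (inner ℝ (gradient f x) v : ℝ) - M / 2 * t ^ 2 * ‖v‖ ^ 2 with hφ
  have hder : ∀ t : ℝ, HasDerivAt φ
      (fderiv ℝ f (x + t • v) v - (inner ℝ (gradient f x) v : ℝ) - M * t * ‖v‖ ^ 2) t := by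
    intro t
    have hline : HasDerivAt (fun t : ℝ => x + t • v) v t := by
      simpa using ((hasDerivAt_id t).smul_const v).const_add x
    have h1 : HasDerivAt (fun t : ℝ => f (x + t • v)) (fderiv ℝ f (x + t • v) v) t :=
      (hd (x + t • v)).hasFDerivAt.comp_hasDerivAt t hline
    have h2 : HasDerivAt (fun t : ℝ => t * (inner ℝ (gradient f x) v : ℝ))
        ((inner ℝ (gradient f x) v : ℝ)) t := by
      simpa using (hasDerivAt_id t).mul_const _
    have h3 : HasDerivAt (fun t : ℝ => M / 2 * t ^ 2 * ‖v‖ ^ 2)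
        (M * t * ‖v‖ ^ 2) t := by
      have := ((hasDerivAt_pow 2 t).const_mul (M / 2)).mul_const (‖v‖ ^ 2)
      refine this.congr_deriv ?_
      show M / 2 * (((2:ℕ):ℝ) * t ^ 1) * ‖v‖ ^ 2 = _
      push_cast
      ring
    exact (h1.sub h2).sub h3
  have hdiff : ∀ t : ℝ, DifferentiableAt ℝ φ t := fun t => (hder t).differentiableAt
  have hderiv_nonpos : ∀ t ∈ interior (Set.Icc (0:ℝ) 1), deriv φ t ≤ 0 := by
    intro t ht
    rw [interior_Icc] at ht
    rw [(hder t).deriv]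
    have key : fderiv ℝ f (x + t • v) v - (inner ℝ (gradient f x) v : ℝ) ≤ M * t * ‖v‖ ^ 2 := by
      have h0 : (inner ℝ (gradient f x) v : ℝ) = fderiv ℝ f x v := hgrad x v
      rw [h0]
      have : fderiv ℝ f (x + t • v) v - fderiv ℝ f x v
          = (fderiv ℝ f (x + t • v) - fderiv ℝ f x) v := by simp
      rw [this]
      calc (fderiv ℝ f (x + t • v) - fderiv ℝ f x) v
          ≤ ‖(fderiv ℝ f (x + t • v) - fderiv ℝ f x) v‖ := le_abs_self _
        _ ≤ ‖fderiv ℝ f (x + t • v) - fderiv ℝ f x‖ * ‖v‖ :=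
            (fderiv ℝ f (x + t • v) - fderiv ℝ f x).le_opNorm v
        _ ≤ M * ‖(x + t • v) - x‖ * ‖v‖ := by
            have := hlip (x + t • v) x
            nlinarith [norm_nonneg v]
        _ = M * (|t| * ‖v‖) * ‖v‖ := by rw [add_sub_cancel_left, norm_smul]; norm_num
        _ = M * t * ‖v‖ ^ 2 := by rw [abs_of_pos ht.1]; ring
    linarith
  have hanti : AntitoneOn φ (Set.Icc 0 1) := by
    apply antitoneOn_of_deriv_nonpos (convex_Icc 0 1)
      (fun t _ => (hdiff t).continuousAt.continuousWithinAt)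
      (fun t ht => (hdiff t).differentiableWithinAt) ?_
    intro t ht
    exact hderiv_nonpos t ht
  have := hanti (Set.mem_Icc.2 ⟨le_refl 0, by norm_num⟩) (Set.mem_Icc.2 ⟨by norm_num, le_refl 1⟩) (by norm_num)
  simp only [hφ, zero_smul, add_zero, zero_pow, mul_zero, zero_mul, sub_zero, one_smul,
    one_mul, one_pow, mul_one] at this
  linarith


/-- Descent lemma for the proximal Newton step: if `z` minimizes the quadratic
`l1` subproblem at `x` with `H ⪰ γI`, then for `0 < α < 1`,
`F(x) − F(x + αz) ≥ (1/2)αγ‖z‖² − (1/2)α²M‖z‖²`, where `F(x) = f(x) + λ‖x‖₁`. -/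
theorem prox_newton_descent (n : ℕ) (f : EuclideanSpace ℝ (Fin n) → ℝ) (M lam γ : ℝ)
    (hconv : ConvexOn ℝ Set.univ f) (hf : ContDiff ℝ 2 f)
    (hM : ∀ y, ‖iteratedFDeriv ℝ 2 f y‖ ≤ M) (hlam : 0 < lam) (hγ : 0 < γ)
    (x z : EuclideanSpace ℝ (Fin n))
    (H : EuclideanSpace ℝ (Fin n) →L[ℝ] EuclideanSpace ℝ (Fin n))
    (hsym : ∀ u v : EuclideanSpace ℝ (Fin n), (inner ℝ (H u) v : ℝ) = inner ℝ u (H v))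
    (hH : ∀ v : EuclideanSpace ℝ (Fin n), γ * ‖v‖^2 ≤ (inner ℝ v (H v) : ℝ))
    (hz : ∀ w : EuclideanSpace ℝ (Fin n),
      (inner ℝ (gradient f x) z : ℝ) + (1/2) * (inner ℝ z (H z) : ℝ) + lam * ∑ i, |x i + z i|
        ≤ (inner ℝ (gradient f x) w : ℝ) + (1/2) * (inner ℝ w (H w) : ℝ) + lam * ∑ i, |x i + w i|)
    (α : ℝ) (hα0 : 0 < α) (hα1 : α < 1) :
    (1/2) * α * γ * ‖z‖^2 - (1/2) * α^2 * M * ‖z‖^2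
      ≤ (f x + lam * ∑ i, |x i|) - (f (x + α • z) + lam * ∑ i, |(x + α • z) i|) := by
  set g : ℝ := (inner ℝ (gradient f x) z : ℝ) with hg
  set Q : ℝ := (inner ℝ z (H z) : ℝ) with hQdef
  set L0 : ℝ := ∑ i, |x i| with hL0
  set L1 : ℝ := ∑ i, |x i + z i| with hL1
  set Lα : ℝ := ∑ i, |(x + α • z) i| with hLa
  -- minimality at w = 0
  have hz0 : g + (1/2) * Q + lam * L1 ≤ lam * L0 := by
    have := hz 0
    simpa [inner_zero_right, map_zero] using this
  -- Taylor bound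
  have T : f (x + α • z) ≤ f x + α * g + M / 2 * (α ^ 2 * ‖z‖ ^ 2) := by
    have := taylor_ub f M hf hM x (α • z)
    rw [real_inner_smul_right] at this
    calc f (x + α • z) ≤ f x + α * g + M / 2 * ‖α • z‖ ^ 2 := this
      _ = f x + α * g + M / 2 * (α ^ 2 * ‖z‖ ^ 2) := by
          rw [norm_smul, mul_pow, Real.norm_eq_abs, sq_abs]
  -- l1 convexity bound
  have S : Lα ≤ (1 - α) * L0 + α * L1 := by
    rw [hLa, hL0, hL1, Finset.mul_sum, Finset.mul_sum, ← Finset.sum_add_distrib]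
    apply Finset.sum_le_sum
    intro i _
    have hxi : (x + α • z) i = (1 - α) * x i + α * (x i + z i) := by
      simp [PiLp.add_apply, PiLp.smul_apply, smul_eq_mul]; ring
    rw [hxi]
    calc |(1 - α) * x i + α * (x i + z i)|
        ≤ |(1 - α) * x i| + |α * (x i + z i)| := abs_add_le _ _
      _ = (1 - α) * |x i| + α * |x i + z i| := by
          rw [abs_mul, abs_mul, abs_of_pos (by linarith : (0:ℝ) < 1 - α), abs_of_pos hα0]
  have h1 : α * (g + (1/2) * Q + lam * L1) ≤ α * (lam * L0) :=
    mul_le_mul_of_nonneg_left hz0 hα0.le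
  have h2 : α * (γ * ‖z‖ ^ 2) ≤ α * Q := mul_le_mul_of_nonneg_left (hH z) hα0.le
  have h3 : lam * Lα ≤ lam * ((1 - α) * L0 + α * L1) :=
    mul_le_mul_of_nonneg_left S hlam.le
  nlinarith [T, h1, h2, h3]
end

section
/- Under the hypotheses of the descent lemma (f C² convex with Hessian bounded by M, H ⪰ γI ≻ 0, z the minimizer of the quadratic l1 subproblem at x), for any 0 < α < γ/M with α < 1, the step x ↦ x + αz strictly decreases F(x) = f(x) + λ‖x‖₁ whenever z ≠ 0; i.e., F(x + αz) < F(x). -/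
set_option maxHeartbeats 1000000


/-- Strict decrease: under the descent-lemma hypotheses, for any `0 < α < γ/M`
with `α < 1`, the step `x ↦ x + αz` strictly decreases `F(x) = f(x) + λ‖x‖₁`
whenever `z ≠ 0`. -/
theorem prox_newton_strict_decrease (n : ℕ) (f : EuclideanSpace ℝ (Fin n) → ℝ) (M lam γ : ℝ)
    (hconv : ConvexOn ℝ Set.univ f) (hf : ContDiff ℝ 2 f)
    (hM : ∀ y, ‖iteratedFDeriv ℝ 2 f y‖ ≤ M) (hM0 : 0 < M) (hlam : 0 < lam) (hγ : 0 < γ)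
    (x z : EuclideanSpace ℝ (Fin n))
    (H : EuclideanSpace ℝ (Fin n) →L[ℝ] EuclideanSpace ℝ (Fin n))
    (hsym : ∀ u v : EuclideanSpace ℝ (Fin n), (inner ℝ (H u) v : ℝ) = inner ℝ u (H v))
    (hH : ∀ v : EuclideanSpace ℝ (Fin n), γ * ‖v‖^2 ≤ (inner ℝ v (H v) : ℝ))
    (hz : ∀ w : EuclideanSpace ℝ (Fin n),
      (inner ℝ (gradient f x) z : ℝ) + (1/2) * (inner ℝ z (H z) : ℝ) + lam * ∑ i, |x i + z i|
        ≤ (inner ℝ (gradient f x) w : ℝ) + (1/2) * (inner ℝ w (H w) : ℝ) + lam * ∑ i, |x i + w i|)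
    (hz0 : z ≠ 0)
    (α : ℝ) (hα0 : 0 < α) (hαM : α < γ / M) (hα1 : α < 1) :
    f (x + α • z) + lam * ∑ i, |(x + α • z) i| < f x + lam * ∑ i, |x i| := by
  classical
  have hznorm : 0 < ‖z‖ := norm_pos_iff.mpr hz0
  have hαMγ : α * M < γ := (lt_div_iff₀ hM0).mp hαM
  set t : ℝ := α * M / γ with ht_def
  have ht0 : 0 < t := by positivity
  have ht1 : t < 1 := (div_lt_one hγ).mpr hαMγ
  -- abbreviations
  set A : ℝ := inner ℝ (gradient f x) z with hA_def
  set q : ℝ := inner ℝ z (H z) with hq_def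
  set s : ℝ := ∑ i, |x i + z i| with hs_def
  set s0 : ℝ := ∑ i, |x i| with hs0_def
  have hqγ : γ * ‖z‖ ^ 2 ≤ q := hH z
  -- convexity of the ℓ¹ term
  have habs : ∀ c : ℝ, 0 ≤ c → c ≤ 1 →
      (∑ i, |x i + c * z i|) ≤ (1 - c) * s0 + c * s := by
    intro c hc0 hc1
    have : ∀ i, |x i + c * z i| ≤ (1 - c) * |x i| + c * |x i + z i| := by
      intro i
      have h1 : x i + c * z i = (1 - c) * x i + c * (x i + z i) := by ring
      rw [h1]
      calc |(1 - c) * x i + c * (x i + z i)| ≤ |(1 - c) * x i| + |c * (x i + z i)| :=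
            abs_add_le _ _
        _ = (1 - c) * |x i| + c * |x i + z i| := by
            rw [abs_mul, abs_mul, abs_of_nonneg (by linarith), abs_of_nonneg hc0]
    calc (∑ i, |x i + c * z i|) ≤ ∑ i, ((1 - c) * |x i| + c * |x i + z i|) :=
          Finset.sum_le_sum fun i _ => this i
      _ = (1 - c) * s0 + c * s := by
          rw [Finset.sum_add_distrib, ← Finset.mul_sum, ← Finset.mul_sum]
  -- optimality at w = t • z
  have hzt := hz (t • z)
  have h1 : (inner ℝ (gradient f x) (t • z) : ℝ) = t * A := real_inner_smul_right _ _ _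
  have h2 : (inner ℝ (t • z) (H (t • z)) : ℝ) = t ^ 2 * q := by
    rw [map_smul, real_inner_smul_left, real_inner_smul_right]; ring
  have h3 : (∑ i, |x i + (t • z) i|) ≤ (1 - t) * s0 + t * s := by
    have := habs t ht0.le ht1.le
    simpa [PiLp.smul_apply, smul_eq_mul] using this
  have hkey : A + lam * s - lam * s0 ≤ -((1 + t) / 2) * q := by
    have hq0 : 0 ≤ q := le_trans (by positivity) hqγ
    have hineq : A + (1/2) * q + lam * s ≤ t * A + (1/2) * (t ^ 2 * q)
        + lam * ((1 - t) * s0 + t * s) := by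
      calc A + (1/2) * q + lam * s ≤ (inner ℝ (gradient f x) (t • z) : ℝ)
            + (1/2) * (inner ℝ (t • z) (H (t • z)) : ℝ) + lam * ∑ i, |x i + (t • z) i| := hzt
        _ ≤ t * A + (1/2) * (t ^ 2 * q) + lam * ((1 - t) * s0 + t * s) := by
            rw [h1, h2]
            have := mul_le_mul_of_nonneg_left h3 hlam.le
            linarith
    have h1t : 0 < 1 - t := by linarith
    nlinarith [mul_pos h1t h1t]
  clear_value t A q s s0
  -- gradient and derivative facts
  have hgrad : ∀ v : EuclideanSpace ℝ (Fin n), (inner ℝ (gradient f x) v : ℝ) = fderiv ℝ f x v := by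
    intro v
    show (inner ℝ ((InnerProductSpace.toDual ℝ _).symm (fderiv ℝ f x)) v : ℝ) = _
    exact InnerProductSpace.toDual_symm_apply
  have hdf : Differentiable ℝ f := hf.differentiable (by norm_num)
  have hdf' : Differentiable ℝ (fderiv ℝ f) :=
    (hf.fderiv_right (m := 1) (by norm_num)).differentiable one_ne_zero
  -- bound on second derivative
  have hbound2 : ∀ y, ‖fderiv ℝ (fderiv ℝ f) y‖ ≤ M := by
    intro y
    have e1 : ‖fderiv ℝ (fderiv ℝ f) y‖ = ‖iteratedFDeriv ℝ 2 f y‖ := by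
      rw [← norm_iteratedFDeriv_zero (𝕜 := ℝ) (f := fderiv ℝ (fderiv ℝ f)) (x := y)]
      rw [norm_iteratedFDeriv_fderiv, norm_iteratedFDeriv_fderiv]
    rw [e1]; exact hM y
  -- Lipschitz gradient
  have hlip : ∀ y, ‖fderiv ℝ f y - fderiv ℝ f x‖ ≤ M * ‖y - x‖ := by
    intro y
    exact Convex.norm_image_sub_le_of_norm_hasFDerivWithin_le
      (f := fderiv ℝ f) (f' := fderiv ℝ (fderiv ℝ f))
      (fun u _ => (hdf' u).hasFDerivAt.hasFDerivWithinAt)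
      (fun u _ => hbound2 u) (convex_univ) (Set.mem_univ x) (Set.mem_univ y)
  -- quadratic upper bound on the segment
  have hquad : f (x + α • z) ≤ f x + α * A + M * α ^ 2 * ‖z‖ ^ 2 := by
    set g : EuclideanSpace ℝ (Fin n) → ℝ :=
      fun y => f y - (fderiv ℝ f x y - fderiv ℝ f x x) with hg_def
    set S := Metric.closedBall x (α * ‖z‖) with hS_def
    have hgd : ∀ y, HasFDerivAt g (fderiv ℝ f y - fderiv ℝ f x) y := by
      intro y
      exact ((hdf y).hasFDerivAt).sub ((fderiv ℝ f x).hasFDerivAt.sub_const _)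
    have hxS : x ∈ S := Metric.mem_closedBall_self (by positivity)
    have hyS : x + α • z ∈ S := by
      simp only [hS_def, Metric.mem_closedBall, dist_eq_norm, add_sub_cancel_left,
        norm_smul, Real.norm_eq_abs, abs_of_pos hα0]
      exact le_refl _
    have hgs : ‖g (x + α • z) - g x‖ ≤ (M * (α * ‖z‖)) * ‖(x + α • z) - x‖ :=
      Convex.norm_image_sub_le_of_norm_hasFDerivWithin_le
        (fun u _ => (hgd u).hasFDerivWithinAt)
        (fun u hu => by
          calc ‖fderiv ℝ f u - fderiv ℝ f x‖ ≤ M * ‖u - x‖ := hlip u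
            _ ≤ M * (α * ‖z‖) := by
                have : ‖u - x‖ ≤ α * ‖z‖ := by
                  simpa [dist_eq_norm] using Metric.mem_closedBall.mp hu
                exact mul_le_mul_of_nonneg_left this hM0.le)
        (convex_closedBall _ _) hxS hyS
    have hnorm : ‖(x + α • z) - x‖ = α * ‖z‖ := by
      rw [add_sub_cancel_left, norm_smul, Real.norm_eq_abs, abs_of_pos hα0]
    have hgx : g x = f x := by simp [hg_def]
    have hAα : fderiv ℝ f x (α • z) = α * A := by
      rw [map_smul, smul_eq_mul, hA_def, hgrad z]
    have hgxz : g (x + α • z) = f (x + α • z) - α * A := by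
      simp only [hg_def]
      rw [map_add, hAα]; ring
    rw [hgxz, hgx, hnorm] at hgs
    have h6 := (abs_le.mp (by rwa [Real.norm_eq_abs] at hgs)).2
    have e : M * (α * ‖z‖) * (α * ‖z‖) = M * α ^ 2 * ‖z‖ ^ 2 := by ring
    linarith [h6, e.le]
  -- ℓ¹ term at the new point
  have hl1 : (∑ i, |(x + α • z) i|) ≤ (1 - α) * s0 + α * s := by
    have := habs α hα0.le hα1.le
    simpa [PiLp.add_apply, PiLp.smul_apply, smul_eq_mul] using this
  -- combine
  have hq2 : -((1 + t) / 2) * q ≤ -((1 + t) / 2) * (γ * ‖z‖ ^ 2) := by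
    apply neg_le_neg at hqγ
    nlinarith [hqγ, ht0]
  have hz2 : 0 < ‖z‖ ^ 2 := by positivity
  have hfinal : α * (A + lam * s - lam * s0) + M * α ^ 2 * ‖z‖ ^ 2 < 0 := by
    have h5 : A + lam * s - lam * s0 ≤ -((1 + t) / 2) * (γ * ‖z‖ ^ 2) :=
      le_trans hkey hq2
    have ht_eq : t * γ = α * M := by
      rw [ht_def]; field_simp
    have c1 : α * (A + lam * s - lam * s0) ≤ α * (-((1 + t) / 2) * (γ * ‖z‖ ^ 2)) :=
      mul_le_mul_of_nonneg_left h5 hα0.le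
    have c2 : α * (-((1 + t) / 2) * (γ * ‖z‖ ^ 2)) + M * α ^ 2 * ‖z‖ ^ 2
        = (α * (α * M - γ) / 2 - α * (t * γ - α * M) / 2) * ‖z‖ ^ 2 := by ring
    have c4 : (α * (α * M - γ) / 2 - α * (t * γ - α * M) / 2) * ‖z‖ ^ 2 < 0 := by
      rw [ht_eq]
      apply mul_neg_of_neg_of_pos _ hz2
      nlinarith [hαMγ, hα0]
    linarith
  calc f (x + α • z) + lam * ∑ i, |(x + α • z) i|
      ≤ f x + α * A + M * α ^ 2 * ‖z‖ ^ 2 + lam * ((1 - α) * s0 + α * s) := by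
        have := mul_le_mul_of_nonneg_left hl1 hlam.le
        linarith [hquad]
    _ < f x + lam * s0 := by nlinarith [hfinal, hlam.le]
end
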